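/- Let ~ be a right congruence of finite index on Σ*. If ~ has a critical tuple, then there exists a critical tuple (u2, v2, u, v) in ~ such that u2 u ~ u2 w u and v2 u ~ v2 w u for all w ∈ {u, v}*. -/

import Mathlib

/-! Common definitions for sliding-window / visibly pushdown formalizations. -/

/-- `γ` grows polynomially: `γ(n) ∈ O(n^k)` for some `k`. -/
def GrowsPolynomially (γ : ℕ → ℕ) : Prop :=
  ∃ k C : ℕ, ∀ n : ℕ, γ n ≤ C * (n + 1) ^ k

/-- `γ` grows exponentially: there is `c > 1` with `γ(n) ≥ c^n` for infinitely many `n`. -/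
def GrowsExponentially (γ : ℕ → ℕ) : Prop :=
  ∃ c : ℝ, 1 < c ∧ ∀ m : ℕ, ∃ n : ℕ, m ≤ n ∧ c ^ n ≤ (γ n : ℝ)

/-- A set of words is suffix-closed. -/
def SuffixClosed {α : Type} (X : Set (List α)) : Prop :=
  ∀ x ∈ X, ∀ s : List α, s <:+ x → s ∈ X

/-- Domain of a partial function presented with `Option`. -/
def pdom {α β : Type} (t : List α → Option β) : Set (List α) := {x | t x ≠ none}

/-- The `t`-growth of `X`: the number of values of `t` on words of `X` of length at most `n`. -/
noncomputable def growthOf {α : Type} {Y : Type} (t : List α → Y) (X : Set (List α)) (n : ℕ) : ℕ :=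
  (t '' {x | x ∈ X ∧ x.length ≤ n}).ncard

/-- Growth of a language: number of its words of length at most `n`. -/
noncomputable def langGrowth {β : Type} (L : Set (List β)) (n : ℕ) : ℕ :=
  {y | y ∈ L ∧ y.length ≤ n}.ncard

/-- Suffix expansion of a (total or partial) function: the tuple of values on all
nonempty suffixes `a₁⋯aₙ, a₂⋯aₙ, …, aₙ` of the input. -/
def cev {α : Type} {Y : Type} (t : List α → Y) (x : List α) : List Y :=
  x.tails.dropLast.map t

/-- Image of `X` under the partial function `t`. -/
def optImage {α β : Type} (t : List α → Option β) (X : Set (List α)) : Set β :=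
  {y | ∃ x ∈ X, t x = some y}

/-- A language is bounded if it is contained in `w₁* w₂* ⋯ w_k*`. -/
def BoundedLang {β : Type} (L : Set (List β)) : Prop :=
  ∃ ws : List (List β), ∀ x ∈ L, ∃ ms : List ℕ, ms.length = ws.length ∧
    x = (List.zipWith (fun (w : List β) (m : ℕ) => (List.replicate m w).flatten) ws ms).flatten

/-- `{u,v}*`: all concatenations of copies of `u` and `v`. -/
def UVStar {α : Type} (u v : List α) : Set (List α) :=
  {w | ∃ l : List (List α), (∀ p ∈ l, p = u ∨ p = v) ∧ w = l.flatten}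

/-- `{u,v}^{≤ n}`: concatenations of at most `n` words, each equal to `u` or `v`. -/
def UVPow {α : Type} (u v : List α) (n : ℕ) : Set (List α) :=
  {w | ∃ l : List (List α), (∀ p ∈ l, p = u ∨ p = v) ∧ l.length ≤ n ∧ w = l.flatten}

/-- The set `{u₂,v₂}{u,v}* Z`. -/
def FoolingSet {α : Type} (u₂ v₂ u v : List α) (Z : Set (List α)) : Set (List α) :=
  {x | ∃ a w z, (a = u₂ ∨ a = v₂) ∧ w ∈ UVStar u v ∧ z ∈ Z ∧ x = a ++ (w ++ z)}

/-- Linear fooling scheme for a partial function `t`. -/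
def IsLinearFoolingScheme {α Y : Type} (t : List α → Option Y)
    (u₂ v₂ u v : List α) (Z : Set (List α)) : Prop :=
  u₂ <:+ u ∧ v₂ <:+ v ∧ u₂.length = v₂.length ∧
  FoolingSet u₂ v₂ u v Z ⊆ pdom t ∧
  ∃ C : ℕ, ∀ n : ℕ, ∃ z ∈ Z, z.length ≤ C * (n + 1) ∧
    ∀ w ∈ UVPow u v n, t (u₂ ++ (w ++ z)) ≠ t (v₂ ++ (w ++ z))

/-- `X` contains a linear fooling set for `t`. -/
def ContainsLinearFoolingSet {α Y : Type} (t : List α → Option Y) (X : Set (List α)) : Prop :=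
  ∃ u₂ v₂ u v Z, IsLinearFoolingScheme t u₂ v₂ u v Z ∧ FoolingSet u₂ v₂ u v Z ⊆ X

/-! ### Transducers and rational functions -/

/-- A finite-state transducer over `(α, β)` with terminal output function. -/
structure Transducer (α β : Type) where
  Q : Type
  finQ : Fintype Q
  I : Set Q
  F : Set Q
  Δ : Set (Q × List α × List β × Q)
  finΔ : Δ.Finite
  o : Q → List β

namespace Transducer

variable {α β : Type}

/-- A run from `p` to `r` with input `x` and output `y`. -/
inductive Run (A : Transducer α β) : A.Q → List α → List β → A.Q → Prop
  | nil (q : A.Q) : Run A q [] [] q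
  | cons {p q r : A.Q} {x₁ x : List α} {y₁ y : List β} :
      (p, x₁, y₁, q) ∈ A.Δ → Run A q x y r → Run A p (x₁ ++ x) (y₁ ++ y) r

/-- The transduction defined by a transducer. -/
def T (A : Transducer α β) : Set (List α × List β) :=
  {p | ∃ q₀ q y, q₀ ∈ A.I ∧ q ∈ A.F ∧ A.Run q₀ p.1 y q ∧ p.2 = y ++ A.o q}

end Transducer

/-- A partial function is rational if its graph is the transduction of some transducer. -/
def IsRationalFun {α β : Type} (t : List α → Option (List β)) : Prop :=
  ∃ A : Transducer α β, ∀ x y, t x = some y ↔ (x, y) ∈ A.T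

/-! ### Right congruences, suffix expansions, critical tuples -/

/-- A right congruence: an equivalence relation compatible with appending on the right. -/
def IsRightCongruence {α : Type} (r : List α → List α → Prop) : Prop :=
  Equivalence r ∧ ∀ x y z : List α, r x y → r (x ++ z) (y ++ z)

/-- Suffix expansion of a relation: words of the same length whose corresponding
nonempty suffixes are all related. -/
def SuffixExpansion {α : Type} (r : List α → List α → Prop) (x y : List α) : Prop :=
  x.length = y.length ∧ ∀ i < x.length, r (x.drop i) (y.drop i)

/-- Number of `r`-classes of words of length at most `n`. -/
noncomputable def classCount {α : Type} (r : List α → List α → Prop) (n : ℕ) : ℕ :=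
  Set.ncard {C : Set (List α) | ∃ x : List α, x.length ≤ n ∧ C = {y | r x y}}

/-- A relation has finite index if it has finitely many classes. -/
def FiniteIndex {α : Type} (r : List α → List α → Prop) : Prop :=
  Set.Finite {C : Set (List α) | ∃ x : List α, C = {y | r x y}}

/-- Critical tuple in a right congruence. -/
def IsCriticalTuple {α : Type} (r : List α → List α → Prop) (u₂ v₂ u v : List α) : Prop :=
  1 ≤ u₂.length ∧ u₂.length = v₂.length ∧ u₂ <:+ u ∧ v₂ <:+ v ∧
  ∀ w ∈ UVStar u v, ¬ r (u₂ ++ w) (v₂ ++ w)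

/-- The Myhill–Nerode right congruence of a language. -/
def MNrel {α : Type} (L : Set (List α)) (x y : List α) : Prop :=
  ∀ z : List α, x ++ z ∈ L ↔ y ++ z ∈ L

/-! ### Suffix distance and the canonical right congruence of a rational function -/

/-- Longest common prefix. -/
def cpre {β : Type} [DecidableEq β] : List β → List β → List β
  | a :: x, b :: y => if a = b then a :: cpre x y else []
  | _, _ => []

/-- `‖x,y‖ = |x| + |y| − 2|x ∧ y|`, where `x ∧ y` is the longest common suffix. -/
def suffDist {β : Type} [DecidableEq β] (x y : List β) : ℕ :=
  x.length + y.length - 2 * (cpre x.reverse y.reverse).length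

/-- Value of a partial function (defaulting to the empty word off the domain). -/
def pval {α β : Type} (t : List α → Option (List β)) (x : List α) : List β :=
  (t x).getD []

/-- The right congruence `R_t` of Reutenauer–Schützenberger. -/
def Rt {α β : Type} [DecidableEq β] (t : List α → Option (List β)) (u v : List α) : Prop :=
  (∀ z : List α, u ++ z ∈ pdom t ↔ v ++ z ∈ pdom t) ∧
  Set.Finite {d : ℕ | ∃ w : List α, u ++ w ∈ pdom t ∧ v ++ w ∈ pdom t ∧
      d = suffDist (pval t (u ++ w)) (pval t (v ++ w))}

/-- Two partial functions are adjacent. -/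
def Adjacent {α β : Type} [DecidableEq β] (t₁ t₂ : List α → Option (List β)) : Prop :=
  Set.Finite {d : ℕ | ∃ w : List α, w ∈ pdom t₁ ∧ w ∈ pdom t₂ ∧
      d = suffDist (pval t₁ w) (pval t₂ w)}

/-! ### Visibly pushdown automata -/

/-- Kinds of letters of a pushdown alphabet. -/
inductive VPKind : Type
  | call : VPKind
  | ret : VPKind
  | intern : VPKind
deriving DecidableEq

/-- A visibly pushdown automaton over the pushdown alphabet determined by `pa`.
The bottom-of-stack symbol `⊥` is represented implicitly by the empty stack. -/
structure VPA (α : Type) (pa : α → VPKind) where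
  Q : Type
  finQ : Fintype Q
  Γ : Type
  finΓ : Fintype Γ
  q₀ : Q
  F : Set Q
  δc : Q → α → Γ × Q
  δr : Q → α → Option Γ → Q
  δi : Q → α → Q

namespace VPA

variable {α : Type} {pa : α → VPKind}

/-- One step of the VPA on a configuration (stack with top at the head, state). -/
def step (A : VPA α pa) (c : List A.Γ × A.Q) (a : α) : List A.Γ × A.Q :=
  match pa a with
  | VPKind.call => ((A.δc c.2 a).1 :: c.1, (A.δc c.2 a).2)
  | VPKind.intern => (c.1, A.δi c.2 a)
  | VPKind.ret =>
    match c.1 with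
    | [] => ([], A.δr c.2 a none)
    | γ :: st => (st, A.δr c.2 a (some γ))

/-- Extended transition function on words. -/
def run (A : VPA α pa) (c : List A.Γ × A.Q) (w : List α) : List A.Γ × A.Q :=
  w.foldl A.step c

/-- The language accepted by a VPA (from the initial configuration `⊥q₀`). -/
def acceptsLang (A : VPA α pa) : Set (List α) :=
  {w | (A.run ([], A.q₀) w).2 ∈ A.F}

/-- Language accepted from a configuration. -/
def AccLang (A : VPA α pa) (c : List A.Γ × A.Q) : Set (List α) :=
  {w | (A.run c w).2 ∈ A.F}

/-- The reachable configurations. -/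
def rConf (A : VPA α pa) : Set (List A.Γ × A.Q) :=
  Set.range (fun w => A.run ([], A.q₀) w)

end VPA

/-- A language is a visibly pushdown language over the pushdown alphabet `pa`. -/
def IsVPL {α : Type} (pa : α → VPKind) (L : Set (List α)) : Prop :=
  ∃ A : VPA α pa, L = A.acceptsLang

/-- Well-matched words over a pushdown alphabet. -/
inductive WellMatched {α : Type} (pa : α → VPKind) : List α → Prop
  | nil : WellMatched pa []
  | intern (a : α) : pa a = VPKind.intern → WellMatched pa [a]
  | append {u v : List α} : WellMatched pa u → WellMatched pa v → WellMatched pa (u ++ v)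
  | wrap {w : List α} {a b : α} : WellMatched pa w → pa a = VPKind.call → pa b = VPKind.ret →
      WellMatched pa (a :: (w ++ [b]))

/-- Descending words: concatenations of well-matched words and return letters. -/
def Descending {α : Type} (pa : α → VPKind) (w : List α) : Prop :=
  ∃ l : List (List α),
    (∀ p ∈ l, WellMatched pa p ∨ ∃ b : α, pa b = VPKind.ret ∧ p = [b]) ∧ w = l.flatten

/-- Length-lexicographic order on configurations `⊥αq` (stacks compared bottom-first). -/
def ConfLe {Q Γ : Type} (ltQ : LinearOrder Q) (ltΓ : LinearOrder Γ)
    (c d : List Γ × Q) : Prop :=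
  c.1.length < d.1.length ∨
    (c.1.length = d.1.length ∧
      (List.Lex ltΓ.lt c.1.reverse d.1.reverse ∨ (c.1 = d.1 ∧ ltQ.le c.2 d.2)))

/-- `rep` chooses from each equivalence class of reachable configurations the
length-lexicographically least representative. -/
def IsRepFun {α : Type} {pa : α → VPKind} (A : VPA α pa)
    (ltQ : LinearOrder A.Q) (ltΓ : LinearOrder A.Γ)
    (rep : List A.Γ × A.Q → List A.Γ × A.Q) : Prop :=
  ∀ c ∈ A.rConf, rep c ∈ A.rConf ∧ A.AccLang (rep c) = A.AccLang c ∧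
    ∀ c' ∈ A.rConf, A.AccLang c' = A.AccLang c → ConfLe ltQ ltΓ (rep c) c'

/-- `ν_A(w)`: the representative of the configuration reached on `w`. -/
def nuA {α : Type} {pa : α → VPKind} (A : VPA α pa)
    (rep : List A.Γ × A.Q → List A.Γ × A.Q) (w : List α) : List A.Γ × A.Q :=
  rep (A.run ([], A.q₀) w)

/-- `σ₀(w)`: the states representing the Myhill–Nerode classes of the nonempty suffixes. -/
def sigma0 {α : Type} {pa : α → VPKind} (A : VPA α pa)
    (rep : List A.Γ × A.Q → List A.Γ × A.Q) (w : List α) : List A.Q :=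
  w.tails.dropLast.map fun s => (nuA A rep s).2

/-- `φ(w)`: the state transformation of a well-matched word. -/
def phiVPA {α : Type} {pa : α → VPKind} (A : VPA α pa) (w : List α) : A.Q → A.Q :=
  fun p => (A.run ([], p) w).2

/-- `σ₁(w) = φ(w) q₂ ⋯ qₙ`, a word over the alphabet `Q^Q ∪ Q`. -/
def sigma1 {α : Type} {pa : α → VPKind} (A : VPA α pa)
    (rep : List A.Γ × A.Q → List A.Γ × A.Q) (w : List α) : List ((A.Q → A.Q) ⊕ A.Q) :=
  Sum.inl (phiVPA A w) :: ((sigma0 A rep w).tail.map Sum.inr)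

/-! ### Real-time right transducers -/

/-- A real-time right transducer (reads its input from right to left). -/
structure RightTransducer (α β : Type) where
  Q : Type
  finQ : Fintype Q
  F : Set Q
  I : Set Q
  Δ : Set (Q × α × List β × Q)
  finΔ : Δ.Finite
  o : Q → List β

namespace RightTransducer

variable {α β : Type}

/-- Input word of a sequence of transitions. -/
def inputOf {Q : Type} (ts : List (Q × α × List β × Q)) : List α :=
  ts.map fun tr => tr.2.1

/-- Output word of a sequence of transitions. -/
def outputOf {Q : Type} (ts : List (Q × α × List β × Q)) : List β :=
  (ts.map fun tr => tr.2.2.1).flatten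

/-- `IsRunFrom A q ts p`: `ts` is a run on its input from the (rightmost) state `p`
to the (leftmost) state `q`; the transitions are listed left to right. -/
def IsRunFrom (A : RightTransducer α β) : A.Q → List (A.Q × α × List β × A.Q) → A.Q → Prop
  | q, [], p => q = p
  | q, tr :: ts, p => tr ∈ A.Δ ∧ tr.1 = q ∧ IsRunFrom A tr.2.2.2 ts p

/-- There is a run on `w` from `p` (right) to `q` (left). -/
def RunOn (A : RightTransducer α β) (q : A.Q) (w : List α) (p : A.Q) : Prop :=
  ∃ ts, A.IsRunFrom q ts p ∧ inputOf ts = w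

/-- `q ⪯ p`: there is a run from `p` to `q`. -/
def Below (A : RightTransducer α β) (q p : A.Q) : Prop :=
  ∃ w, A.RunOn q w p

/-- The partial function defined by a right transducer. -/
def Defines (A : RightTransducer α β) (t : List α → Option (List β)) : Prop :=
  ∀ x y, t x = some y ↔ ∃ p q ts, p ∈ A.F ∧ q ∈ A.I ∧ A.IsRunFrom p ts q ∧
    inputOf ts = x ∧ y = A.o p ++ outputOf ts

/-- Every state occurs on some initial accepting run. -/
def Trim (A : RightTransducer α β) : Prop :=
  ∀ s : A.Q, ∃ p q ts₁ ts₂, p ∈ A.F ∧ q ∈ A.I ∧ A.IsRunFrom p ts₁ s ∧ A.IsRunFrom s ts₂ q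

/-- Every input word has at most one initial accepting run. -/
def Unambiguous (A : RightTransducer α β) : Prop :=
  ∀ p p' q q' ts ts', p ∈ A.F → p' ∈ A.F → q ∈ A.I → q' ∈ A.I →
    A.IsRunFrom p ts q → A.IsRunFrom p' ts' q' → inputOf ts = inputOf ts' →
    p = p' ∧ ts = ts'

/-- `w` is guarded by `p`: some run on `w` from `p` stays in the SCC of `p`. -/
def Guarded (A : RightTransducer α β) (p : A.Q) (w : List α) : Prop :=
  ∃ q', A.RunOn q' w p ∧ A.Below p q'

/-- The transducer is well-behaved: the terminal outputs of guarded accepting runs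
from the same state on words of equal length coincide. -/
def WellBehaved (A : RightTransducer α β) : Prop :=
  ∀ (p q q' : A.Q) ts ts', q ∈ A.F → q' ∈ A.F →
    A.IsRunFrom q ts p → A.IsRunFrom q' ts' p →
    A.Guarded p (inputOf ts) → A.Guarded p (inputOf ts') →
    (inputOf ts).length = (inputOf ts').length →
    A.o q ++ outputOf ts = A.o q' ++ outputOf ts'

end RightTransducer

/-! ### The Parikh-like map Ψ -/

/-- `Ψ(w)`: each letter of `w` paired with its position counted from the right (1-based). -/
def Psi {α : Type} (w : List α) : Set (α × ℕ) :=
  {p | ∃ i : ℕ, w[i]? = some p.1 ∧ p.2 = w.length - i}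

/-- `Ψ(L) = ⋃_{w ∈ L} Ψ(w)`. -/
def PsiL {α : Type} (L : Set (List α)) : Set (α × ℕ) :=
  ⋃ w ∈ L, Psi w

namespace S5

variable {α : Type}

lemma uvstar_flatten {u v : List α} {l : List (List α)}
    (h : ∀ p ∈ l, p ∈ UVStar u v) : l.flatten ∈ UVStar u v := by
  induction l with
  | nil => exact ⟨[], by simp, by simp⟩
  | cons a l ih =>
    obtain ⟨la, hla, ha⟩ := h a (List.mem_cons_self)
    obtain ⟨ll, hll, hl⟩ := ih (fun p hp => h p (List.mem_cons_of_mem _ hp))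
    refine ⟨la ++ ll, ?_, ?_⟩
    · intro p hp
      rcases List.mem_append.1 hp with h' | h'
      · exact hla p h'
      · exact hll p h'
    · simp [ha, hl]

lemma uvstar_append {u v a b : List α} (ha : a ∈ UVStar u v) (hb : b ∈ UVStar u v) :
    a ++ b ∈ UVStar u v := by
  obtain ⟨la, hla, rfl⟩ := ha
  obtain ⟨lb, hlb, rfl⟩ := hb
  refine ⟨la ++ lb, ?_, by simp⟩
  intro p hp
  rcases List.mem_append.1 hp with h' | h'
  · exact hla p h'
  · exact hlb p h'

lemma uvstar_left (u v : List α) : u ∈ UVStar u v := ⟨[u], by simp, by simp⟩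

lemma uvstar_right (u v : List α) : v ∈ UVStar u v := ⟨[v], by simp, by simp⟩

lemma uvstar_subset {x y U V : List α} (hU : U ∈ UVStar x y) (hV : V ∈ UVStar x y) :
    UVStar U V ⊆ UVStar x y := by
  rintro w ⟨l, hl, rfl⟩
  exact uvstar_flatten (fun p hp => by rcases hl p hp with rfl | rfl <;> assumption)

lemma exists_idem {Q : Type} [Finite Q] (φ : Q → Q) :
    ∃ N, 0 < N ∧ φ^[N] ∘ φ^[N] = φ^[N] := by
  obtain ⟨i, j, hne, heq⟩ := Finite.exists_ne_map_eq_of_infinite (fun n : ℕ => φ^[n])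
  have key : ∃ i d, 0 < d ∧ φ^[i + d] = φ^[i] := by
    rcases Nat.lt_or_ge i j with h | h
    · exact ⟨i, j - i, by omega, by rw [show i + (j - i) = j by omega]; exact heq.symm⟩
    · have h' : j < i := by omega
      exact ⟨j, i - j, by omega, by rw [show j + (i - j) = i by omega]; exact heq⟩
  obtain ⟨i, d, hd, heq'⟩ := key
  have step : ∀ n, i ≤ n → φ^[n + d] = φ^[n] := by
    intro n hn
    have h1 : n + d = (n - i) + (i + d) := by omega
    have h2 : (n - i) + i = n := by omega
    rw [h1, Function.iterate_add, heq', ← Function.iterate_add, h2]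
  have mult : ∀ s n, i ≤ n → φ^[n + s * d] = φ^[n] := by
    intro s
    induction s with
    | zero => intro n _; simp
    | succ t ih =>
      intro n hn
      have h1 : n + (t + 1) * d = (n + t * d) + d := by ring
      rw [h1, step _ (by omega), ih n hn]
  have hle : i ≤ (i + 1) * d := by
    have := Nat.le_mul_of_pos_right (i + 1) hd
    omega
  refine ⟨(i + 1) * d, by positivity, ?_⟩
  rw [← Function.iterate_add]
  exact mult (i + 1) ((i + 1) * d) hle

variable {r : List α → List α → Prop}

def Qt (_hE : Equivalence r) : Type _ := Quotient (⟨r, _hE⟩ : Setoid (List α))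

def mk (hE : Equivalence r) (w : List α) : Qt hE := Quotient.mk _ w

lemma mk_eq_iff (hE : Equivalence r) (a b : List α) : mk hE a = mk hE b ↔ r a b := by
  constructor
  · intro h
    exact Quotient.exact h
  · intro h
    exact Quotient.sound h

lemma finite_Qt (hE : Equivalence r) (hfi : FiniteIndex r) : Finite (Qt hE) := by
  haveI := hfi.to_subtype
  refine Finite.of_injective (α := Qt hE)
    (fun q => (⟨Quotient.lift (fun x => {y | r x y})
        (fun a b hab => by
          have hab' : r a b := hab
          exact Set.ext fun z => ⟨fun hz => hE.trans (hE.symm hab') hz,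
            fun hz => hE.trans hab' hz⟩) q,
      by
        induction q using Quotient.ind with | _ a =>
        exact ⟨a, rfl⟩⟩ : {C : Set (List α) | ∃ x, C = {y | r x y}})) ?_
  intro q q' h
  induction q using Quotient.ind with | _ a =>
  induction q' using Quotient.ind with | _ b =>
  have h' : {y | r a y} = {y | r b y} := congrArg Subtype.val h
  have hb : b ∈ {y | r a y} := by rw [h']; exact hE.refl b
  exact Quotient.sound hb

def act (hE : Equivalence r) (hcong : ∀ x y z : List α, r x y → r (x ++ z) (y ++ z))
    (w : List α) : Qt hE → Qt hE :=
  Quotient.map (· ++ w) (fun a b hab => hcong a b w hab)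

lemma act_mk (hE : Equivalence r) (hcong : ∀ x y z : List α, r x y → r (x ++ z) (y ++ z))
    (w a : List α) : act hE hcong w (mk hE a) = mk hE (a ++ w) := rfl

lemma act_append (hE : Equivalence r) (hcong : ∀ x y z : List α, r x y → r (x ++ z) (y ++ z))
    (a b : List α) : act hE hcong (a ++ b) = act hE hcong b ∘ act hE hcong a := by
  funext q
  induction q using Quotient.ind with | _ z =>
  show mk hE (z ++ (a ++ b)) = mk hE ((z ++ a) ++ b)
  rw [List.append_assoc]

lemma act_nil (hE : Equivalence r) (hcong : ∀ x y z : List α, r x y → r (x ++ z) (y ++ z)) :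
    act hE hcong [] = id := by
  funext q
  induction q using Quotient.ind with | _ z =>
  show mk hE (z ++ []) = mk hE z
  rw [List.append_nil]

lemma act_replicate (hE : Equivalence r) (hcong : ∀ x y z : List α, r x y → r (x ++ z) (y ++ z))
    (n : ℕ) (B : List α) :
    act hE hcong ((List.replicate n B).flatten) = (act hE hcong B)^[n] := by
  induction n with
  | zero => simp [act_nil]
  | succ t ih =>
    rw [List.replicate_succ, List.flatten_cons, act_append, ih, Function.iterate_succ]

end S5

/-- a finite-index right congruence with a critical tuple has a
critical tuple `(u₂, v₂, u, v)` with `u₂u ~ u₂wu` and `v₂u ~ v₂wu` for all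
`w ∈ {u,v}*`. -/
theorem statement5 {α : Type} [Fintype α] (r : List α → List α → Prop)
    (hrc : IsRightCongruence r) (hfi : FiniteIndex r)
    (hct : ∃ u₂ v₂ u v, IsCriticalTuple r u₂ v₂ u v) :
    ∃ u₂ v₂ u v, IsCriticalTuple r u₂ v₂ u v ∧
      ∀ w ∈ UVStar u v, r (u₂ ++ u) (u₂ ++ (w ++ u)) ∧ r (v₂ ++ u) (v₂ ++ (w ++ u)) := by
  classical
  obtain ⟨x₂, y₂, x, y, hx1, hlen, hsx, hsy, hcrit⟩ := hct
  obtain ⟨hE, hcong⟩ := hrc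
  haveI : Finite (S5.Qt hE) := S5.finite_Qt hE hfi
  let F : List α → S5.Qt hE → S5.Qt hE := S5.act hE hcong
  let rk : (S5.Qt hE → S5.Qt hE) → ℕ := fun φ => (Set.range φ).ncard
  have hxne : x ≠ [] := by
    intro h
    have hl := hsx.length_le
    rw [h] at hl
    simp only [List.length_nil, Nat.le_zero] at hl
    omega
  -- minimal rank word
  let Rset : Set ℕ := {n | ∃ w, w ∈ UVStar x y ∧ w ≠ [] ∧ n = rk (F w)}
  have hRne : Rset.Nonempty := ⟨rk (F x), x, S5.uvstar_left x y, hxne, rfl⟩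
  obtain ⟨w₀, hw₀m, hw₀ne, hw₀r⟩ := Nat.sInf_mem hRne
  -- idempotent power of w₀
  obtain ⟨N, hN, hNid⟩ := S5.exists_idem (F w₀)
  set G := (List.replicate N w₀).flatten with hGdef
  have hGm : G ∈ UVStar x y :=
    S5.uvstar_flatten (fun p hp => by rw [List.eq_of_mem_replicate hp]; exact hw₀m)
  have hGne : G ≠ [] := by
    obtain ⟨n, rfl⟩ : ∃ n, N = n + 1 := ⟨N - 1, by omega⟩
    rw [hGdef, List.replicate_succ, List.flatten_cons]
    intro hcon
    exact hw₀ne (List.append_eq_nil_iff.mp hcon).1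
  set ε : S5.Qt hE → S5.Qt hE := F G with hεdef
  have hεiter : ε = (F w₀)^[N] := S5.act_replicate hE hcong N w₀
  have hεidem : ε ∘ ε = ε := by rw [hεiter]; exact hNid
  have hεε : ∀ q, ε (ε q) = ε q := congrFun hεidem
  have hεle : rk ε ≤ sInf Rset := by
    rw [hw₀r]
    refine Set.ncard_le_ncard ?_ (Set.toFinite _)
    obtain ⟨n, rfl⟩ : ∃ n, N = n + 1 := ⟨N - 1, by omega⟩
    rw [hεiter, Function.iterate_succ']
    exact Set.range_comp_subset_range _ _
  have hεr : rk ε = sInf Rset := le_antisymm hεle (Nat.sInf_le ⟨G, hGm, hGne, rfl⟩)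
  set T : Set (S5.Qt hE) := Set.range ε with hTdef
  have hTfin : T.Finite := Set.toFinite _
  -- key block lemma
  have hblock : ∀ z : List α, z ∈ UVStar x y →
      ∃ k, 0 < k ∧ ∀ t ∈ T, F ((List.replicate k (G ++ (z ++ G))).flatten) t = t := by
    intro z hz
    set h : S5.Qt hE → S5.Qt hE := F (G ++ (z ++ G)) with hhdef
    have hh : h = (ε ∘ F z) ∘ ε := by
      rw [hhdef]
      show F (G ++ (z ++ G)) = (ε ∘ F z) ∘ ε
      rw [show F (G ++ (z ++ G)) = F (z ++ G) ∘ F G from S5.act_append hE hcong G (z ++ G),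
        show F (z ++ G) = F G ∘ F z from S5.act_append hE hcong z G]
    have h1 : Set.range h ⊆ T := by
      rw [hh, Function.comp_assoc]
      exact Set.range_comp_subset_range _ _
    have hmem : rk h ∈ Rset :=
      ⟨G ++ (z ++ G), S5.uvstar_append hGm (S5.uvstar_append hz hGm),
        fun hcon => hGne (List.append_eq_nil_iff.mp hcon).1, rfl⟩
    have h2 : T.ncard ≤ (Set.range h).ncard := by
      have : T.ncard = rk ε := rfl
      rw [this, hεr]
      exact Nat.sInf_le hmem
    have h3 : Set.range h = T := Set.eq_of_subset_of_ncard_le h1 h2 hTfin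
    have hcomp : h ∘ ε = h := by
      rw [hh]
      funext q
      simp only [Function.comp_apply, hεε]
    have h4 : h '' T = T := by
      have : h '' T = Set.range (h ∘ ε) := (Set.range_comp h ε).symm
      rw [this, hcomp, h3]
    obtain ⟨k, hk, hkid⟩ := S5.exists_idem h
    refine ⟨k, hk, ?_⟩
    have hFk : F ((List.replicate k (G ++ (z ++ G))).flatten) = h^[k] :=
      S5.act_replicate hE hcong k (G ++ (z ++ G))
    have himg : ∀ n, h^[n] '' T = T := by
      intro n
      induction n with
      | zero => simp
      | succ m ih => rw [Function.iterate_succ', Set.image_comp, ih, h4]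
    intro t ht
    rw [hFk]
    obtain ⟨u', hu', rfl⟩ : t ∈ h^[k] '' T := (himg k).symm ▸ ht
    calc h^[k] (h^[k] u') = (h^[k] ∘ h^[k]) u' := rfl
      _ = h^[k] u' := by rw [hkid]
  obtain ⟨k, hk, hku⟩ := hblock x (S5.uvstar_left x y)
  obtain ⟨m, hm, hmv⟩ := hblock y (S5.uvstar_right x y)
  set U := (List.replicate k (G ++ (x ++ G))).flatten with hUdef
  set V := (List.replicate m (G ++ (y ++ G))).flatten with hVdef
  have hUm : U ∈ UVStar x y :=
    S5.uvstar_flatten (fun p hp => by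
      rw [List.eq_of_mem_replicate hp]
      exact S5.uvstar_append hGm (S5.uvstar_append (S5.uvstar_left x y) hGm))
  have hVm : V ∈ UVStar x y :=
    S5.uvstar_flatten (fun p hp => by
      rw [List.eq_of_mem_replicate hp]
      exact S5.uvstar_append hGm (S5.uvstar_append (S5.uvstar_right x y) hGm))
  -- suffix facts
  have hsuffU : x₂ ++ G <:+ U := by
    obtain ⟨c, hc⟩ := hsx
    have s1 : x₂ ++ G <:+ x ++ G := ⟨c, by rw [← hc, List.append_assoc]⟩
    have s2 : x ++ G <:+ G ++ (x ++ G) := ⟨G, rfl⟩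
    have s3 : G ++ (x ++ G) <:+ U := by
      obtain ⟨n, rfl⟩ : ∃ n, k = n + 1 := ⟨k - 1, by omega⟩
      rw [hUdef, List.replicate_succ', List.flatten_append]
      exact ⟨(List.replicate n (G ++ (x ++ G))).flatten, by simp⟩
    exact (s1.trans s2).trans s3
  have hsuffV : y₂ ++ G <:+ V := by
    obtain ⟨c, hc⟩ := hsy
    have s1 : y₂ ++ G <:+ y ++ G := ⟨c, by rw [← hc, List.append_assoc]⟩
    have s2 : y ++ G <:+ G ++ (y ++ G) := ⟨G, rfl⟩
    have s3 : G ++ (y ++ G) <:+ V := by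
      obtain ⟨n, rfl⟩ : ∃ n, m = n + 1 := ⟨m - 1, by omega⟩
      rw [hVdef, List.replicate_succ', List.flatten_append]
      exact ⟨(List.replicate n (G ++ (y ++ G))).flatten, by simp⟩
    exact (s1.trans s2).trans s3
  -- absorption of UVStar U V words on T
  have habs : ∀ w ∈ UVStar U V, ∀ q ∈ T, F w q = q := by
    rintro w ⟨l, hl, rfl⟩
    induction l with
    | nil =>
      intro q _
      show F [] q = q
      rw [show F ([] : List α) = id from S5.act_nil hE hcong]
      rfl
    | cons p l ih =>
      intro q hq
      rw [List.flatten_cons, show F (p ++ l.flatten) = F l.flatten ∘ F p from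
        S5.act_append hE hcong p l.flatten]
      have hpq : F p q = q := by
        rcases hl p (List.mem_cons_self) with rfl | rfl
        · exact hku q hq
        · exact hmv q hq
      simp only [Function.comp_apply, hpq]
      exact ih (fun p' hp' => hl p' (List.mem_cons_of_mem _ hp')) q hq
  refine ⟨x₂ ++ G, y₂ ++ G, U, V, ⟨?_, ?_, hsuffU, hsuffV, ?_⟩, ?_⟩
  · simp only [List.length_append]
    omega
  · simp [hlen]
  · -- criticality
    intro w hw
    have hw' : w ∈ UVStar x y := S5.uvstar_subset hUm hVm hw
    have hGw : G ++ w ∈ UVStar x y := S5.uvstar_append hGm hw'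
    have := hcrit (G ++ w) hGw
    intro hcon
    apply this
    have e1 : (x₂ ++ G) ++ w = x₂ ++ (G ++ w) := List.append_assoc x₂ G w
    have e2 : (y₂ ++ G) ++ w = y₂ ++ (G ++ w) := List.append_assoc y₂ G w
    rw [← e1, ← e2]
    exact hcon
  · -- absorption conclusion
    intro w hw
    have hq1 : S5.mk hE (x₂ ++ G) ∈ T := ⟨S5.mk hE x₂, rfl⟩
    have hq2 : S5.mk hE (y₂ ++ G) ∈ T := ⟨S5.mk hE y₂, rfl⟩
    have hUfix : ∀ q ∈ T, F U q = q := fun q hq => hku q hq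
    constructor
    · rw [← S5.mk_eq_iff hE]
      have e1 : S5.mk hE ((x₂ ++ G) ++ U) = F U (S5.mk hE (x₂ ++ G)) := rfl
      have e2 : S5.mk hE ((x₂ ++ G) ++ (w ++ U)) = F (w ++ U) (S5.mk hE (x₂ ++ G)) := rfl
      rw [e1, e2, show F (w ++ U) = F U ∘ F w from S5.act_append hE hcong w U]
      simp only [Function.comp_apply, habs w hw _ hq1]
    · rw [← S5.mk_eq_iff hE]
      have e1 : S5.mk hE ((y₂ ++ G) ++ U) = F U (S5.mk hE (y₂ ++ G)) := rfl
      have e2 : S5.mk hE ((y₂ ++ G) ++ (w ++ U)) = F (w ++ U) (S5.mk hE (y₂ ++ G)) := rfl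
      rw [e1, e2, show F (w ++ U) = F U ∘ F w from S5.act_append hE hcong w U]
      simp only [Function.comp_apply, habs w hw _ hq2]
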